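/- For every real number μ and every nonzero vector v ∈ ℝ^{2n+1} satisfying A·v = μ·v (with A regarded as a real matrix), the family of coordinates (v₁, v₂, …, v_{2n+1}) of v is linearly independent over the field ℚ of rational numbers. -/

import Mathlib

open Polynomial Finset

section Dfacts

variable {d : ℕ → ℤ} (hd1 : d 1 = 1)
  (hdk : ∀ k : ℕ, 2 ≤ k → d k = 1 + ∏ j ∈ Finset.Icc 1 (k - 1), d j)

include hd1 hdk

lemma d_one_le : ∀ k, 1 ≤ k → 1 ≤ d k := by
  intro k
  induction k using Nat.strong_induction_on with
  | _ k IH =>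
    intro hk
    rcases eq_or_lt_of_le hk with h1 | h2
    · rw [← h1, hd1]
    · rw [hdk k h2]
      have : (1:ℤ) ≤ ∏ j ∈ Finset.Icc 1 (k-1), d j := by
        calc (1:ℤ) = ∏ j ∈ Finset.Icc 1 (k-1), 1 := by simp
        _ ≤ ∏ j ∈ Finset.Icc 1 (k-1), d j := by
            apply Finset.prod_le_prod
            · intro i _; norm_num
            · intro i hi
              simp only [Finset.mem_Icc] at hi
              exact IH i (by omega) hi.1
      linarith

lemma d_two_le : ∀ k, 2 ≤ k → 2 ≤ d k := by
  intro k hk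
  rw [hdk k hk]
  have : (1:ℤ) ≤ ∏ j ∈ Finset.Icc 1 (k-1), d j := by
    calc (1:ℤ) = ∏ j ∈ Finset.Icc 1 (k-1), 1 := by simp
    _ ≤ ∏ j ∈ Finset.Icc 1 (k-1), d j := by
        apply Finset.prod_le_prod
        · intro i _; norm_num
        · intro i hi
          simp only [Finset.mem_Icc] at hi
          exact d_one_le hd1 hdk i hi.1
  linarith

lemma d_lt_d : ∀ k l, 1 ≤ k → k < l → d k < d l := by
  intro k l hk hkl
  have hl2 : 2 ≤ l := by omega
  rw [hdk l hl2]
  have hkmem : k ∈ Finset.Icc 1 (l-1) := by simp [Finset.mem_Icc]; omega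
  rw [← Finset.mul_prod_erase _ _ hkmem]
  have h1 : (1:ℤ) ≤ ∏ j ∈ (Finset.Icc 1 (l-1)).erase k, d j := by
    calc (1:ℤ) = ∏ j ∈ (Finset.Icc 1 (l-1)).erase k, 1 := by simp
    _ ≤ _ := by
        apply Finset.prod_le_prod
        · intro i _; norm_num
        · intro i hi
          simp only [Finset.mem_erase, Finset.mem_Icc] at hi
          exact d_one_le hd1 hdk i hi.2.1
  nlinarith [d_one_le hd1 hdk k hk]

lemma prod_Icc2 : ∀ t, 1 ≤ t → ∏ j ∈ Finset.Icc 2 t, d j = d (t+1) - 1 := by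
  intro t ht
  have h := hdk (t+1) (by omega)
  have hins : Finset.Icc 1 t = insert 1 (Finset.Icc 2 t) := by
    ext x; simp [Finset.mem_Icc, Finset.mem_insert]; omega
  have hnotmem : (1:ℕ) ∉ Finset.Icc 2 t := by simp
  rw [show t + 1 - 1 = t from rfl, hins, Finset.prod_insert hnotmem, hd1, one_mul] at h
  omega

lemma sum_prod_erase : ∀ t, 1 ≤ t →
    ∑ k ∈ Finset.Icc 2 t, ∏ j ∈ (Finset.Icc 2 t).erase k, d j
      = (∏ j ∈ Finset.Icc 2 t, d j) - 1 := by
  intro t ht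
  induction t, ht using Nat.le_induction with
  | base => simp [Finset.Icc_eq_empty_of_lt]
  | succ t ht IH =>
    have hnot : (t+1) ∉ Finset.Icc 2 t := by simp
    have hins : Finset.Icc 2 (t+1) = insert (t+1) (Finset.Icc 2 t) := by
      ext x; simp [Finset.mem_Icc, Finset.mem_insert]; omega
    rw [hins, Finset.sum_insert hnot, Finset.erase_insert hnot, Finset.prod_insert hnot]
    have hrest : ∑ k ∈ Finset.Icc 2 t, ∏ j ∈ (insert (t+1) (Finset.Icc 2 t)).erase k, d j
        = d (t+1) * ((∏ j ∈ Finset.Icc 2 t, d j) - 1) := by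
      rw [← IH, Finset.mul_sum]
      apply Finset.sum_congr rfl
      intro k hk
      have hkne : t + 1 ≠ k := by simp [Finset.mem_Icc] at hk; omega
      rw [Finset.erase_insert_of_ne hkne,
        Finset.prod_insert (fun h => hnot (Finset.mem_of_mem_erase h))]
    rw [hrest]
    have hd : d (t+1) = (∏ j ∈ Finset.Icc 2 t, d j) + 1 := by
      have := prod_Icc2 hd1 hdk t ht; omega
    rw [hd]; ring

end Dfacts

noncomputable def PP (d : ℕ → ℤ) (m : ℕ) : Polynomial ℤ :=
  (X - C (d 1)) * ∏ k ∈ Finset.Icc 2 m, (X - C (d k))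
  - ∑ k ∈ Finset.Icc 2 m, ∏ j ∈ (Finset.Icc 2 m).erase k, (X - C (d j))

section PPfacts

variable {d : ℕ → ℤ} {m : ℕ}

lemma M_monic : ((X - C (d 1)) * ∏ k ∈ Finset.Icc 2 m, (X - C (d k))).Monic :=
  (monic_X_sub_C _).mul (monic_prod_of_monic _ _ fun k _ => monic_X_sub_C _)

lemma M_natDegree (hm : 1 ≤ m) :
    ((X - C (d 1)) * ∏ k ∈ Finset.Icc 2 m, (X - C (d k))).natDegree = m := by
  rw [(monic_X_sub_C _).natDegree_mul (monic_prod_of_monic _ _ fun k _ => monic_X_sub_C _),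
    natDegree_X_sub_C, natDegree_prod_of_monic _ _ fun k _ => monic_X_sub_C _]
  have h1 : ∑ k ∈ Finset.Icc 2 m, (X - C (d k)).natDegree = ∑ k ∈ Finset.Icc 2 m, 1 :=
    Finset.sum_congr rfl fun j _ => natDegree_X_sub_C _
  rw [h1, Finset.sum_const, smul_eq_mul, mul_one, Nat.card_Icc]
  omega

lemma N_degree_lt (hm : 1 ≤ m) :
    (∑ k ∈ Finset.Icc 2 m, ∏ j ∈ (Finset.Icc 2 m).erase k, (X - C (d j))).degree
      < (m : WithBot ℕ) := by
  apply lt_of_le_of_lt (Polynomial.degree_sum_le _ _)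
  rw [Finset.sup_lt_iff (by exact_mod_cast WithBot.bot_lt_coe m)]
  intro k hk
  have hmono : (∏ j ∈ (Finset.Icc 2 m).erase k, (X - C (d j))).Monic :=
    monic_prod_of_monic _ _ fun j _ => monic_X_sub_C _
  have hm2 : 2 ≤ m := by
    simp only [Finset.mem_Icc] at hk; omega
  have hnd : (∏ j ∈ (Finset.Icc 2 m).erase k, (X - C (d j))).natDegree = m - 2 := by
    rw [natDegree_prod_of_monic _ _ fun j _ => monic_X_sub_C _]
    have h1 : ∑ j ∈ (Finset.Icc 2 m).erase k, (X - C (d j)).natDegree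
        = ∑ j ∈ (Finset.Icc 2 m).erase k, 1 :=
      Finset.sum_congr rfl fun j _ => natDegree_X_sub_C _
    rw [h1, Finset.sum_const, smul_eq_mul, mul_one, Finset.card_erase_of_mem hk, Nat.card_Icc]
    omega
  rw [Polynomial.degree_eq_natDegree hmono.ne_zero, hnd]
  exact_mod_cast Nat.sub_lt (by omega) (by omega)

lemma PP_monic (hm : 1 ≤ m) : (PP d m).Monic :=
  M_monic.sub_of_left (by
    rw [Polynomial.degree_eq_natDegree M_monic.ne_zero, M_natDegree hm]
    exact N_degree_lt hm)

lemma PP_natDegree (hm : 1 ≤ m) : (PP d m).natDegree = m := by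
  have h1 : (PP d m).degree = (m : WithBot ℕ) := by
    rw [PP, Polynomial.degree_sub_eq_left_of_degree_lt, Polynomial.degree_eq_natDegree
      M_monic.ne_zero, M_natDegree hm]
    rw [Polynomial.degree_eq_natDegree M_monic.ne_zero, M_natDegree hm]
    exact N_degree_lt hm
  exact natDegree_eq_of_degree_eq_some h1

lemma PP_eval (x : ℤ) : (PP d m).eval x =
    (x - d 1) * ∏ k ∈ Finset.Icc 2 m, (x - d k)
      - ∑ k ∈ Finset.Icc 2 m, ∏ j ∈ (Finset.Icc 2 m).erase k, (x - d j) := by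
  simp [PP, eval_prod, Polynomial.eval_finset_sum]

end PPfacts

section PPvals

variable {d : ℕ → ℤ} {m : ℕ} (hd1 : d 1 = 1)
  (hdk : ∀ k : ℕ, 2 ≤ k → d k = 1 + ∏ j ∈ Finset.Icc 1 (k - 1), d j)

lemma prod_zero_sub (s : Finset ℕ) (f : ℕ → ℤ) :
    ∏ j ∈ s, ((0:ℤ) - f j) = (-1)^s.card * ∏ j ∈ s, f j := by
  rw [← Finset.prod_const, ← Finset.prod_mul_distrib]
  apply Finset.prod_congr rfl
  intro j _; ring

lemma prod_sub_reverse (s : Finset ℕ) (f g : ℕ → ℤ) :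
    ∏ j ∈ s, (f j - g j) = (-1)^s.card * ∏ j ∈ s, (g j - f j) := by
  rw [← Finset.prod_const, ← Finset.prod_mul_distrib]
  apply Finset.prod_congr rfl
  intro j _; ring

include hd1 hdk

lemma PP_eval_zero (hm : 3 ≤ m) (hodd : Odd m) : (PP d m).eval 0 = -1 := by
  rw [PP_eval]
  obtain ⟨t, ht⟩ := hodd
  have hcard : (Finset.Icc 2 m).card = m - 1 := by rw [Nat.card_Icc]; omega
  have h1 : ∏ k ∈ Finset.Icc 2 m, ((0:ℤ) - d k) = ∏ k ∈ Finset.Icc 2 m, d k := by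
    rw [prod_zero_sub, hcard]
    have : ((-1:ℤ))^(m-1) = 1 := Even.neg_one_pow ⟨t, by omega⟩
    rw [this, one_mul]
  have h2 : ∀ k ∈ Finset.Icc 2 m, ∏ j ∈ (Finset.Icc 2 m).erase k, ((0:ℤ) - d j)
      = - ∏ j ∈ (Finset.Icc 2 m).erase k, d j := by
    intro k hk
    rw [prod_zero_sub, Finset.card_erase_of_mem hk, hcard]
    have : ((-1:ℤ))^(m-1-1) = -1 := Odd.neg_one_pow (by refine ⟨t-1, by omega⟩)
    rw [this]; ring
  rw [h1, Finset.sum_congr rfl h2, Finset.sum_neg_distrib,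
    sum_prod_erase hd1 hdk m (by omega), hd1]
  ring

lemma PP_eval_one (hm : 3 ≤ m) (hodd : Odd m) : 0 < (PP d m).eval 1 := by
  rw [PP_eval, hd1]
  obtain ⟨t, ht⟩ := hodd
  have key : ∀ k ∈ Finset.Icc 2 m, ∏ j ∈ (Finset.Icc 2 m).erase k, ((1:ℤ) - d j) ≤ -1 := by
    intro k hk
    rw [prod_sub_reverse, Finset.card_erase_of_mem hk, Nat.card_Icc]
    have h1 : ((-1:ℤ))^(m+1-2-1) = -1 := Odd.neg_one_pow (by refine ⟨t-1, by omega⟩)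
    rw [h1]
    have h2 : (1:ℤ) ≤ ∏ j ∈ (Finset.Icc 2 m).erase k, (d j - 1) := by
      calc (1:ℤ) = ∏ j ∈ (Finset.Icc 2 m).erase k, 1 := by simp
      _ ≤ _ := by
          apply Finset.prod_le_prod
          · intro i _; norm_num
          · intro i hi
            simp only [Finset.mem_erase, Finset.mem_Icc] at hi
            have := d_two_le hd1 hdk i hi.2.1
            omega
    linarith
  have hne : (Finset.Icc 2 m).Nonempty := ⟨2, by simp [Finset.mem_Icc]; omega⟩
  have hsum : ∑ k ∈ Finset.Icc 2 m, ∏ j ∈ (Finset.Icc 2 m).erase k, ((1:ℤ) - d j)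
      ≤ ∑ k ∈ Finset.Icc 2 m, (-1:ℤ) := Finset.sum_le_sum key
  rw [Finset.sum_const, nsmul_eq_mul, mul_neg, mul_one] at hsum
  have hcard : 1 ≤ (Finset.Icc 2 m).card := Finset.card_pos.mpr hne
  have hc : ((Finset.Icc 2 m).card : ℤ) ≥ 1 := by exact_mod_cast hcard
  linarith

lemma PP_eval_dk {k : ℕ} (hk : k ∈ Finset.Icc 2 m) :
    (PP d m).eval (d k) = - ∏ j ∈ (Finset.Icc 2 m).erase k, (d k - d j) := by
  rw [PP_eval]
  have h1 : ∏ i ∈ Finset.Icc 2 m, (d k - d i) = 0 :=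
    Finset.prod_eq_zero hk (by ring)
  have h2 : ∑ i ∈ Finset.Icc 2 m, ∏ j ∈ (Finset.Icc 2 m).erase i, (d k - d j)
      = ∏ j ∈ (Finset.Icc 2 m).erase k, (d k - d j) := by
    apply Finset.sum_eq_single_of_mem k hk
    intro i hi hik
    exact Finset.prod_eq_zero (Finset.mem_erase.mpr ⟨Ne.symm hik, hk⟩) (by ring)
  rw [h1, h2]; ring

lemma PP_eval_dk_sign {k : ℕ} (hk : k ∈ Finset.Icc 2 m) :
    ∃ W : ℤ, 0 < W ∧ (PP d m).eval (d k) = (-1)^(m - k + 1) * W := by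
  have hkk : 2 ≤ k ∧ k ≤ m := by simpa [Finset.mem_Icc] using hk
  have hsplit : (Finset.Icc 2 m).erase k = Finset.Icc 2 (k-1) ∪ Finset.Icc (k+1) m := by
    ext x
    simp only [Finset.mem_erase, Finset.mem_Icc, Finset.mem_union]
    omega
  have hdisj : Disjoint (Finset.Icc 2 (k-1)) (Finset.Icc (k+1) m) := by
    rw [Finset.disjoint_left]
    intro a ha hb
    simp only [Finset.mem_Icc] at ha hb
    omega
  have hL : 0 < ∏ j ∈ Finset.Icc 2 (k-1), (d k - d j) := by
    apply Finset.prod_pos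
    intro j hj
    simp only [Finset.mem_Icc] at hj
    have := d_lt_d hd1 hdk j k (by omega) (by omega)
    omega
  have hH : 0 < ∏ j ∈ Finset.Icc (k+1) m, (d j - d k) := by
    apply Finset.prod_pos
    intro j hj
    simp only [Finset.mem_Icc] at hj
    have := d_lt_d hd1 hdk k j (by omega) (by omega)
    omega
  refine ⟨(∏ j ∈ Finset.Icc 2 (k-1), (d k - d j)) * ∏ j ∈ Finset.Icc (k+1) m, (d j - d k),
    mul_pos hL hH, ?_⟩
  rw [PP_eval_dk hd1 hdk hk, hsplit, Finset.prod_union hdisj,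
    prod_sub_reverse (Finset.Icc (k+1) m) (fun j => d k) (fun j => d j), Nat.card_Icc]
  have h3 : m + 1 - (k + 1) = m - k := by omega
  rw [h3, pow_succ]
  ring

end PPvals

section Roots

lemma exists_root_of_mul_neg {f : Polynomial ℝ} {a b : ℝ} (hab : a < b)
    (h : f.eval a * f.eval b < 0) : ∃ x, x ∈ Set.Ioo a b ∧ f.eval x = 0 := by
  rcases mul_neg_iff.mp h with ⟨ha, hb⟩ | ⟨ha, hb⟩
  · have := intermediate_value_Ioo' (le_of_lt hab) (f.continuous.continuousOn (s := Set.Icc a b))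
    have h0 : (0:ℝ) ∈ Set.Ioo (f.eval b) (f.eval a) := ⟨hb, ha⟩
    obtain ⟨x, hx, hfx⟩ := this h0
    exact ⟨x, hx, hfx⟩
  · have := intermediate_value_Ioo (le_of_lt hab) (f.continuous.continuousOn (s := Set.Icc a b))
    have h0 : (0:ℝ) ∈ Set.Ioo (f.eval a) (f.eval b) := ⟨ha, hb⟩
    obtain ⟨x, hx, hfx⟩ := this h0
    exact ⟨x, hx, hfx⟩

variable {d : ℕ → ℤ} {m : ℕ} (hd1 : d 1 = 1)
  (hdk : ∀ k : ℕ, 2 ≤ k → d k = 1 + ∏ j ∈ Finset.Icc 1 (k - 1), d j)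

lemma QQ_eval_int (r : ℤ) :
    ((PP d m).map (Int.castRingHom ℝ)).eval (r : ℝ) = (((PP d m).eval r : ℤ) : ℝ) := by
  rw [Polynomial.eval_map]
  exact Polynomial.eval₂_at_apply _ r

include hd1 hdk

lemma d_two : d 2 = 2 := by
  rw [hdk 2 (le_refl 2)]
  norm_num [hd1]

/-- The main root structure lemma. -/
lemma QQ_roots (hm : 3 ≤ m) (hodd : Odd m) :
    ∃ r0 : ℝ, 0 < r0 ∧ r0 < 1 ∧
      ((PP d m).map (Int.castRingHom ℝ)).roots.Nodup ∧
      Multiset.card ((PP d m).map (Int.castRingHom ℝ)).roots = m ∧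
      r0 ∈ ((PP d m).map (Int.castRingHom ℝ)).roots ∧
      (∀ x ∈ ((PP d m).map (Int.castRingHom ℝ)).roots, 0 < x ∧ (x = r0 ∨ 2 < x)) := by
  set q : Polynomial ℝ := (PP d m).map (Int.castRingHom ℝ) with hq
  have hqmonic : q.Monic := (PP_monic (by omega)).map _
  have hqnd : q.natDegree = m := by
    rw [hq, (PP_monic (by omega)).natDegree_map, PP_natDegree (by omega)]
  have hqne : q ≠ 0 := hqmonic.ne_zero
  -- a point M beyond d m where q is positive
  obtain ⟨M, hM1, hM2⟩ : ∃ M : ℝ, (d m : ℝ) < M ∧ 0 < q.eval M := by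
    have hdeg : 0 < q.degree := by
      rw [Polynomial.degree_eq_natDegree hqne, hqnd]
      exact_mod_cast (by omega : 0 < m)
    have htend := Polynomial.tendsto_atTop_of_leadingCoeff_nonneg q hdeg
      (by rw [hqmonic.leadingCoeff]; norm_num)
    have h1 := htend.eventually_ge_atTop 1
    have h2 := Filter.eventually_ge_atTop ((d m : ℝ) + 1)
    obtain ⟨M, hMa, hMb⟩ := (h1.and h2).exists
    exact ⟨M, by linarith, by linarith⟩
  classical
  set D : ℕ → ℝ := fun k => if k = 0 then 0 else if k = 1 then 1
      else if k ≤ m then (d k : ℝ) else M with hD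
  set K : Finset ℕ := insert 0 (Finset.Icc 2 m) with hK
  have hd2 : d 2 = 2 := d_two hd1 hdk
  -- existence of a root in each interval
  have hex : ∀ k ∈ K, ∃ x, x ∈ Set.Ioo (D k) (D (k+1)) ∧ q.eval x = 0 := by
    intro k hk
    rcases Finset.mem_insert.mp hk with rfl | hk2
    · have hD0 : D 0 = 0 := by simp [hD]
      have hD1 : D 1 = 1 := by simp [hD]
      rw [hD0, hD1]
      apply exists_root_of_mul_neg (by norm_num)
      have e0 : q.eval 0 < 0 := by
        have h : q.eval ((0:ℤ):ℝ) = (((PP d m).eval 0 : ℤ) : ℝ) := QQ_eval_int 0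
        rw [PP_eval_zero hd1 hdk hm hodd] at h
        norm_num at h
        rw [h]
        norm_num
      have e1 : (0:ℝ) < q.eval 1 := by
        have h : q.eval ((1:ℤ):ℝ) = (((PP d m).eval 1 : ℤ) : ℝ) := QQ_eval_int 1
        norm_num at h
        rw [h]
        exact_mod_cast PP_eval_one hd1 hdk hm hodd
      exact mul_neg_of_neg_of_pos e0 e1
    · simp only [Finset.mem_Icc] at hk2
      have hDk : D k = (d k : ℝ) := by
        simp only [hD]
        rw [if_neg (by omega), if_neg (by omega), if_pos (by omega)]
      rcases lt_or_eq_of_le hk2.2 with hkm | hkm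
      · -- k < m
        have hDk1 : D (k+1) = (d (k+1) : ℝ) := by
          simp only [hD]
          rw [if_neg (by omega), if_neg (by omega), if_pos (by omega)]
        rw [hDk, hDk1]
        apply exists_root_of_mul_neg
        · exact_mod_cast d_lt_d hd1 hdk k (k+1) (by omega) (by omega)
        · obtain ⟨W1, hW1, he1⟩ := PP_eval_dk_sign hd1 hdk (Finset.mem_Icc.mpr ⟨hk2.1, hk2.2⟩)
          obtain ⟨W2, hW2, he2⟩ := PP_eval_dk_sign hd1 hdk
            (Finset.mem_Icc.mpr (⟨by omega, by omega⟩ : 2 ≤ k+1 ∧ k+1 ≤ m))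
          rw [show m - (k+1) + 1 = m - k from by omega] at he2
          have hprod : (PP d m).eval (d k) * (PP d m).eval (d (k+1)) < 0 := by
            rw [he1, he2]
            have hpow : ((-1:ℤ))^(m-k+1) * (-1)^(m-k) = -1 := by
              rw [← pow_add]
              exact Odd.neg_one_pow ⟨m - k, by omega⟩
            calc ((-1:ℤ))^(m-k+1) * W1 * ((-1)^(m-k) * W2)
                = ((-1:ℤ))^(m-k+1) * (-1)^(m-k) * (W1 * W2) := by ring
              _ = -(W1 * W2) := by rw [hpow]; ring
              _ < 0 := by nlinarith
          have c1 : q.eval ((d k : ℤ) : ℝ) = (((PP d m).eval (d k) : ℤ) : ℝ) :=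
            QQ_eval_int _
          have c2 : q.eval ((d (k+1) : ℤ) : ℝ) = (((PP d m).eval (d (k+1)) : ℤ) : ℝ) :=
            QQ_eval_int _
          rw [c1, c2, ← Int.cast_mul]
          exact_mod_cast hprod
      · -- k = m
        subst hkm
        have hDk1 : D (k+1) = M := by
          simp only [hD]
          rw [if_neg (by omega), if_neg (by omega), if_neg (by omega)]
        rw [hDk, hDk1]
        apply exists_root_of_mul_neg hM1
        apply mul_neg_of_neg_of_pos _ hM2
        obtain ⟨W1, hW1, he1⟩ := PP_eval_dk_sign hd1 hdk (Finset.mem_Icc.mpr ⟨hk2.1, le_refl k⟩)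
        rw [show k - k + 1 = 1 from by omega, pow_one] at he1
        have c1 : q.eval ((d k : ℤ) : ℝ) = (((PP d k).eval (d k) : ℤ) : ℝ) :=
          QQ_eval_int _
        rw [c1, he1]
        have : (-1) * W1 < 0 := by nlinarith
        exact_mod_cast this
  -- choose the roots
  set r : ℕ → ℝ := fun k =>
    if h : ∃ x, x ∈ Set.Ioo (D k) (D (k+1)) ∧ q.eval x = 0 then h.choose else 0 with hrdef
  have hr : ∀ k ∈ K, r k ∈ Set.Ioo (D k) (D (k+1)) ∧ q.eval (r k) = 0 := by
    intro k hk
    simp only [hrdef]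
    rw [dif_pos (hex k hk)]
    exact (hex k hk).choose_spec
  -- membership structure of K
  have hKmem : ∀ k, k ∈ K ↔ (k = 0 ∨ (2 ≤ k ∧ k ≤ m)) := by
    intro k; simp [hK, Finset.mem_insert, Finset.mem_Icc]
  -- interval bounds comparison
  have hDle : ∀ k ∈ K, ∀ l ∈ K, k < l → D (k+1) ≤ D l := by
    intro k hk l hl hkl
    rw [hKmem] at hk hl
    rcases hk with rfl | hk2
    · rcases hl with rfl | hl2
      · omega
      · have hD1 : D 1 = 1 := by simp [hD]
        have hDl : D l = (d l : ℝ) := by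
          simp only [hD]; rw [if_neg (by omega), if_neg (by omega), if_pos (by omega)]
        rw [hD1, hDl]
        have : (2:ℤ) ≤ d l := d_two_le hd1 hdk l (by omega)
        have : (2:ℝ) ≤ (d l : ℝ) := by exact_mod_cast this
        linarith
    · rcases hl with rfl | hl2
      · omega
      · have hDk1 : D (k+1) = (d (k+1) : ℝ) := by
          simp only [hD]; rw [if_neg (by omega), if_neg (by omega), if_pos (by omega)]
        have hDl : D l = (d l : ℝ) := by
          simp only [hD]; rw [if_neg (by omega), if_neg (by omega), if_pos (by omega)]
        rw [hDk1, hDl]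
        rcases eq_or_lt_of_le (show k + 1 ≤ l from by omega) with h | h
        · rw [h]
        · exact le_of_lt (by exact_mod_cast d_lt_d hd1 hdk (k+1) l (by omega) h)
  have hord : ∀ k ∈ K, ∀ l ∈ K, k < l → r k < r l := by
    intro k hk l hl hkl
    have h1 := (hr k hk).1
    have h2 := (hr l hl).1
    have := hDle k hk l hl hkl
    calc r k < D (k+1) := h1.2
      _ ≤ D l := this
      _ < r l := h2.1
  have hinj : Set.InjOn r K := by
    intro a ha b hb hab
    by_contra hne
    rcases lt_trichotomy a b with h | h | h
    · exact absurd hab (ne_of_lt (hord a ha b hb h))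
    · exact hne h
    · exact absurd hab.symm (ne_of_lt (hord b hb a ha h))
  set S : Finset ℝ := K.image r with hS
  have hcardK : K.card = m := by
    rw [hK, Finset.card_insert_of_notMem (by simp), Nat.card_Icc]
    omega
  have hcardS : S.card = m := by
    rw [hS, Finset.card_image_of_injOn hinj, hcardK]
  have hsub : S ⊆ q.roots.toFinset := by
    intro x hx
    obtain ⟨k, hk, rfl⟩ := Finset.mem_image.mp hx
    rw [Multiset.mem_toFinset, Polynomial.mem_roots hqne]
    exact (hr k hk).2
  have hchain : Multiset.card q.roots = m := by
    have h1 : S.card ≤ q.roots.toFinset.card := Finset.card_le_card hsub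
    have h2 : q.roots.toFinset.card ≤ Multiset.card q.roots := Multiset.toFinset_card_le _
    have h3 : Multiset.card q.roots ≤ q.natDegree := q.card_roots'
    omega
  have htfcard : q.roots.toFinset.card = Multiset.card q.roots := by
    have h1 : S.card ≤ q.roots.toFinset.card := Finset.card_le_card hsub
    have h2 : q.roots.toFinset.card ≤ Multiset.card q.roots := Multiset.toFinset_card_le _
    omega
  have hnodup : q.roots.Nodup := Multiset.toFinset_card_eq_card_iff_nodup.mp htfcard
  have hSeq : q.roots.toFinset = S :=
    (Finset.eq_of_subset_of_card_le hsub (by omega)).symm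
  have h0K : (0:ℕ) ∈ K := Finset.mem_insert_self _ _
  have hr0 := hr 0 h0K
  have hD0 : D 0 = 0 := by simp [hD]
  have hD1 : D 1 = 1 := by simp [hD]
  refine ⟨r 0, by rw [hD0] at hr0; exact hr0.1.1, by rw [hD1] at hr0; exact hr0.1.2, hnodup,
    hchain, ?_, ?_⟩
  · rw [Polynomial.mem_roots hqne]; exact hr0.2
  · intro x hx
    have hx' : x ∈ S := by rw [← hSeq]; exact Multiset.mem_toFinset.mpr hx
    obtain ⟨k, hk, rfl⟩ := Finset.mem_image.mp hx'
    rw [hKmem] at hk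
    rcases hk with rfl | hk2
    · refine ⟨by rw [hD0] at hr0; exact hr0.1.1, Or.inl rfl⟩
    · have hkK : k ∈ K := by rw [hKmem]; exact Or.inr hk2
      have h1 := (hr k hkK).1
      have hDk : D k = (d k : ℝ) := by
        simp only [hD]; rw [if_neg (by omega), if_neg (by omega), if_pos (by omega)]
      rw [hDk] at h1
      have h2 : (2:ℤ) ≤ d k := d_two_le hd1 hdk k (by omega)
      have h2' : (2:ℝ) ≤ (d k : ℝ) := by exact_mod_cast h2
      refine ⟨by linarith [h1.1], Or.inr (by linarith [h1.1])⟩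

end Roots

section Irred

lemma multiset_two_pow_le_prod (s : Multiset ℝ) (h : ∀ x ∈ s, 2 ≤ x) :
    2 ^ (Multiset.card s) ≤ s.prod := by
  induction s using Multiset.induction_on with
  | empty => simp
  | cons a t IH =>
    have ha : 2 ≤ a := h a (Multiset.mem_cons_self a t)
    have ht : ∀ x ∈ t, 2 ≤ x := fun x hx => h x (Multiset.mem_cons_of_mem hx)
    have hIH := IH ht
    rw [Multiset.prod_cons, Multiset.card_cons, pow_succ]
    have hpow : (0:ℝ) < 2 ^ Multiset.card t := by positivity
    calc (2:ℝ) ^ Multiset.card t * 2 ≤ 2 ^ Multiset.card t * a := by nlinarith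
      _ ≤ t.prod * a := by nlinarith
      _ = a * t.prod := by ring

variable {d : ℕ → ℤ} {m : ℕ} (hd1 : d 1 = 1)
  (hdk : ∀ k : ℕ, 2 ≤ k → d k = 1 + ∏ j ∈ Finset.Icc 1 (k - 1), d j)

include hd1 hdk

lemma PP_irreducible_int (hm : 3 ≤ m) (hodd : Odd m) : Irreducible (PP d m) := by
  obtain ⟨r0, hr0pos, hr0lt1, hnodup, hcard, hr0mem, hroots⟩ := QQ_roots hd1 hdk hm hodd
  set q : Polynomial ℝ := (PP d m).map (Int.castRingHom ℝ) with hq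
  have hmonic : (PP d m).Monic := PP_monic (by omega)
  have hqmonic : q.Monic := hmonic.map _
  have hqne : q ≠ 0 := hqmonic.ne_zero
  have hqnd : q.natDegree = m := by rw [hq, hmonic.natDegree_map, PP_natDegree (by omega)]
  have hqsplits : (q.map (RingHom.id ℝ)).Splits := by
    rw [Polynomial.map_id]
    exact Polynomial.splits_iff_card_roots.mpr (by rw [hcard, hqnd])
  rw [Polynomial.map_id] at hqsplits
  -- key auxiliary: a monic factor of PP with positive degree must have r0 among its real roots
  have key : ∀ g : Polynomial ℤ, g.Monic → 1 ≤ g.natDegree →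
      (g.map (Int.castRingHom ℝ)) ∣ q → IsUnit (g.eval 0) →
      r0 ∈ (g.map (Int.castRingHom ℝ)).roots := by
    intro g hgmonic hgdeg hgdvd hgunit
    by_contra hr0not
    set gr : Polynomial ℝ := g.map (Int.castRingHom ℝ) with hgr
    have hgrmonic : gr.Monic := hgmonic.map _
    have hgrne : gr ≠ 0 := hgrmonic.ne_zero
    have hgrsplits : gr.Splits :=
      Polynomial.Splits.of_dvd hqsplits hqne hgdvd
    have hrootsle : gr.roots ≤ q.roots := Polynomial.roots.le_of_dvd hqne hgdvd
    have hallge2 : ∀ x ∈ gr.roots, 2 ≤ x := by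
      intro x hx
      have hxq : x ∈ q.roots := Multiset.mem_of_le hrootsle hx
      rcases (hroots x hxq).2 with rfl | h2
      · exact absurd hx hr0not
      · linarith
    have hcardgr : Multiset.card gr.roots = g.natDegree := by
      rw [Polynomial.splits_iff_card_roots.mp hgrsplits, hgr, hgmonic.natDegree_map]
    have hprodexpr : gr = (gr.roots.map fun a => X - C a).prod :=
      hgrsplits.eq_prod_roots_of_monic hgrmonic
    have heval0 : gr.eval 0 = (-1) ^ (Multiset.card gr.roots) * gr.roots.prod := by
      conv_lhs => rw [hprodexpr]
      rw [Polynomial.eval_multiset_prod, Multiset.map_map]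
      have hmc : gr.roots.map (Polynomial.eval 0 ∘ fun a => X - C a)
          = gr.roots.map Neg.neg := Multiset.map_congr rfl (fun a _ => by simp)
      rw [hmc, Multiset.prod_map_neg]
    have hprodge : (2:ℝ) ≤ gr.roots.prod := by
      have := multiset_two_pow_le_prod gr.roots hallge2
      have h2 : (2:ℝ) ≤ 2 ^ Multiset.card gr.roots := by
        calc (2:ℝ) = 2 ^ 1 := (pow_one 2).symm
        _ ≤ 2 ^ Multiset.card gr.roots := by
            apply pow_le_pow_right₀ (by norm_num)
            omega
      linarith
    have habs : |gr.eval 0| = gr.roots.prod := by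
      rw [heval0, abs_mul, abs_pow, abs_neg, abs_one, one_pow, one_mul,
        abs_of_pos (by linarith)]
    have hevalcast : gr.eval ((0:ℤ):ℝ) = ((g.eval 0 : ℤ) : ℝ) := by
      rw [hgr, Polynomial.eval_map]
      exact Polynomial.eval₂_at_apply _ 0
    rcases Int.isUnit_iff.mp hgunit with h1 | h1 <;>
    · rw [h1] at hevalcast
      norm_num at hevalcast
      rw [hevalcast] at habs
      norm_num at habs
      linarith
  -- now prove irreducibility
  constructor
  · intro hunit
    have := Polynomial.natDegree_eq_zero_of_isUnit hunit
    rw [PP_natDegree (by omega)] at this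
    omega
  · intro g h hgh
    -- make both factors monic
    have hlc : g.leadingCoeff * h.leadingCoeff = 1 := by
      rw [← Polynomial.leadingCoeff_mul, ← hgh]
      exact hmonic
    have hmain : ∀ g' h' : Polynomial ℤ, g'.Monic → h'.Monic → PP d m = g' * h' →
        IsUnit g' ∨ IsUnit h' := by
      intro g' h' hg'm hh'm hgh'
      by_contra hcon
      push_neg at hcon
      have hg'deg : 1 ≤ g'.natDegree := by
        rcases Nat.eq_zero_or_pos g'.natDegree with h0 | h0
        · exfalso
          apply hcon.1
          have := Polynomial.eq_C_of_natDegree_eq_zero h0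
          rw [this, show g'.coeff 0 = 1 from by
            have := hg'm
            rw [Polynomial.Monic, Polynomial.leadingCoeff, h0] at this
            exact this]
          simp
        · omega
      have hh'deg : 1 ≤ h'.natDegree := by
        rcases Nat.eq_zero_or_pos h'.natDegree with h0 | h0
        · exfalso
          apply hcon.2
          have := Polynomial.eq_C_of_natDegree_eq_zero h0
          rw [this, show h'.coeff 0 = 1 from by
            have := hh'm
            rw [Polynomial.Monic, Polynomial.leadingCoeff, h0] at this
            exact this]
          simp
        · omega
      have heval0 : g'.eval 0 * h'.eval 0 = -1 := by
        rw [← Polynomial.eval_mul, ← hgh', PP_eval_zero hd1 hdk hm hodd]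
      have hg'unit : IsUnit (g'.eval 0) :=
        isUnit_of_mul_isUnit_left (by rw [heval0]; exact
          (Int.isUnit_iff.mpr (Or.inr rfl)))
      have hh'unit : IsUnit (h'.eval 0) :=
        isUnit_of_mul_isUnit_left (by rw [mul_comm] at heval0; rw [heval0]; exact
          (Int.isUnit_iff.mpr (Or.inr rfl)))
      have hqfact : q = (g'.map (Int.castRingHom ℝ)) * (h'.map (Int.castRingHom ℝ)) := by
        rw [hq, hgh', Polynomial.map_mul]
      have hg'dvd : (g'.map (Int.castRingHom ℝ)) ∣ q := ⟨_, hqfact⟩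
      have hh'dvd : (h'.map (Int.castRingHom ℝ)) ∣ q := ⟨_, by rw [hqfact]; ring⟩
      have hg'r0 := key g' hg'm hg'deg hg'dvd hg'unit
      have hh'r0 := key h' hh'm hh'deg hh'dvd hh'unit
      -- r0 has multiplicity ≥ 2, contradicting Nodup
      have hgne : (g'.map (Int.castRingHom ℝ)) ≠ 0 := (hg'm.map _).ne_zero
      have hhne : (h'.map (Int.castRingHom ℝ)) ≠ 0 := (hh'm.map _).ne_zero
      have hrootsmul : q.roots = (g'.map (Int.castRingHom ℝ)).roots
          + (h'.map (Int.castRingHom ℝ)).roots := by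
        rw [hqfact]
        exact Polynomial.roots_mul (by rw [← hqfact]; exact hqne)
      have hcount : 2 ≤ q.roots.count r0 := by
        rw [hrootsmul, Multiset.count_add]
        have c1 : 1 ≤ (g'.map (Int.castRingHom ℝ)).roots.count r0 :=
          Multiset.one_le_count_iff_mem.mpr hg'r0
        have c2 : 1 ≤ (h'.map (Int.castRingHom ℝ)).roots.count r0 :=
          Multiset.one_le_count_iff_mem.mpr hh'r0
        omega
      have := Multiset.nodup_iff_count_le_one.mp hnodup r0
      omega
    rcases Int.mul_eq_one_iff_eq_one_or_neg_one.mp hlc with ⟨hg1, hh1⟩ | ⟨hg1, hh1⟩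
    · exact hmain g h hg1 hh1 hgh
    · have := hmain (-g) (-h) (by rw [Polynomial.Monic, Polynomial.leadingCoeff_neg, hg1]; norm_num)
        (by rw [Polynomial.Monic, Polynomial.leadingCoeff_neg, hh1]; norm_num)
        (by rw [hgh]; ring)
      rcases this with h1 | h1
      · exact Or.inl (by rwa [IsUnit.neg_iff] at h1)
      · exact Or.inr (by rwa [IsUnit.neg_iff] at h1)

end Irred

section Bridge

lemma PP_eval_real {d : ℕ → ℤ} {m : ℕ} (x : ℝ) :
    ((PP d m).map (Int.castRingHom ℝ)).eval x
      = (x - (d 1 : ℝ)) * ∏ k ∈ Finset.Icc 2 m, (x - (d k : ℝ))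
        - ∑ k ∈ Finset.Icc 2 m, ∏ j ∈ (Finset.Icc 2 m).erase k, (x - (d j : ℝ)) := by
  simp [PP, Polynomial.map_sub, Polynomial.map_mul, Polynomial.map_prod, Polynomial.map_sum,
    eval_prod, Polynomial.eval_finset_sum]

lemma reindex_sum {N : ℕ} (F : ℕ → ℝ) :
    ∑ i ∈ (Finset.univ : Finset (Fin (N+1))).erase 0, F (i.val + 1)
      = ∑ k ∈ Finset.Icc 2 (N+1), F k := by
  refine Finset.sum_bij'
    (fun (i : Fin (N+1)) (_ : i ∈ (Finset.univ : Finset (Fin (N+1))).erase 0) => i.val + 1)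
    (fun k (hk : k ∈ Finset.Icc 2 (N+1)) =>
      (⟨k - 1, by simp only [Finset.mem_Icc] at hk; omega⟩ : Fin (N+1)))
    ?_ ?_ ?_ ?_ ?_
  · intro a ha
    simp only [Finset.mem_erase, Finset.mem_univ, and_true] at ha
    simp only [Finset.mem_Icc]
    have : a.val ≠ 0 := fun h => ha (Fin.ext h)
    omega
  · intro k hk
    simp only [Finset.mem_Icc] at hk
    simp only [Finset.mem_erase, Finset.mem_univ, and_true]
    intro h
    have := congrArg Fin.val h
    simp only [Fin.val_zero] at this
    omega
  · intro a ha
    simp only [Finset.mem_erase, Finset.mem_univ, and_true] at ha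
    have : a.val ≠ 0 := fun h => ha (Fin.ext h)
    apply Fin.ext
    show a.val + 1 - 1 = a.val
    omega
  · intro k hk
    simp only [Finset.mem_Icc] at hk
    show k - 1 + 1 = k
    omega
  · intro a ha
    rfl

end Bridge

/-- The coordinates of any eigenvector of the arrowhead matrix `A` (over `ℝ`) are
linearly independent over `ℚ`. -/
theorem stmt3 (n : ℕ) (hn : 1 ≤ n) (d : ℕ → ℤ)
    (hd1 : d 1 = 1)
    (hdk : ∀ k : ℕ, 2 ≤ k → d k = 1 + ∏ j ∈ Finset.Icc 1 (k - 1), d j)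
    (A : Matrix (Fin (2 * n + 1)) (Fin (2 * n + 1)) ℤ)
    (hA : ∀ i j : Fin (2 * n + 1), A i j =
      if i = j then d (i.val + 1)
      else if i.val = 0 ∨ j.val = 0 then 1 else 0) :
    ∀ (mu : ℝ) (v : Fin (2 * n + 1) → ℝ), v ≠ 0 →
      (A.map (Int.cast : ℤ → ℝ)).mulVec v = mu • v →
      LinearIndependent ℚ v := by
  intro mu v hv hAv
  classical
  have hm3 : 3 ≤ 2 * n + 1 := by omega
  have hodd : Odd (2 * n + 1) := ⟨n, rfl⟩
  -- coordinatewise eigen equations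
  have hAv' : ∀ i, (∑ j, ((A i j : ℤ) : ℝ) * v j) = mu * v i := by
    intro i
    have h1 := congr_fun hAv i
    simpa [Matrix.mulVec, dotProduct, Matrix.map_apply] using h1
  have hE1 : ∀ i : Fin (2*n+1), i ≠ 0 → v 0 + (d (i.val+1) : ℝ) * v i = mu * v i := by
    intro i hi
    have h1 := hAv' i
    rw [← Finset.add_sum_erase _ _ (Finset.mem_univ (0 : Fin (2*n+1)))] at h1
    have hterm0 : ((A i 0 : ℤ) : ℝ) = 1 := by
      rw [hA i 0, if_neg hi]; simp
    have himem : i ∈ (Finset.univ : Finset (Fin (2*n+1))).erase 0 :=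
      Finset.mem_erase.mpr ⟨hi, Finset.mem_univ i⟩
    rw [← Finset.add_sum_erase _ _ himem] at h1
    have hAii : ((A i i : ℤ) : ℝ) = (d (i.val+1) : ℝ) := by rw [hA i i, if_pos rfl]
    have hrest : ∀ j ∈ ((Finset.univ : Finset (Fin (2*n+1))).erase 0).erase i,
        ((A i j : ℤ) : ℝ) * v j = 0 := by
      intro j hj
      simp only [Finset.mem_erase, Finset.mem_univ, and_true] at hj
      have hc : ¬(i.val = 0 ∨ j.val = 0) := by
        push_neg
        exact ⟨fun h => hi (Fin.ext h), fun h => hj.2 (Fin.ext h)⟩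
      rw [hA i j, if_neg (fun h => hj.1 h.symm), if_neg hc]
      norm_num
    rw [Finset.sum_eq_zero hrest, hAii, hterm0, one_mul, add_zero] at h1
    linarith [h1]
  have hE0 : v 0 + ∑ i ∈ (Finset.univ : Finset (Fin (2*n+1))).erase 0, v i = mu * v 0 := by
    have h1 := hAv' 0
    rw [← Finset.add_sum_erase _ _ (Finset.mem_univ (0 : Fin (2*n+1)))] at h1
    have hA00 : ((A 0 0 : ℤ) : ℝ) = 1 := by
      rw [hA 0 0, if_pos rfl]
      norm_num [hd1]
    have hrest : ∀ j ∈ (Finset.univ : Finset (Fin (2*n+1))).erase 0,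
        ((A 0 j : ℤ) : ℝ) * v j = v j := by
      intro j hj
      simp only [Finset.mem_erase, Finset.mem_univ, and_true] at hj
      rw [hA 0 j, if_neg (fun h => hj h.symm)]
      simp
    rw [Finset.sum_congr rfl hrest, hA00, one_mul] at h1
    exact h1
  have hkey : ∀ i : Fin (2*n+1), i ≠ 0 → (mu - (d (i.val+1) : ℝ)) * v i = v 0 := by
    intro i hi
    linear_combination (hE1 i hi).symm
  -- v 0 ≠ 0
  have hv0 : v 0 ≠ 0 := by
    intro h0
    have hex : ∃ i, v i ≠ 0 := by
      by_contra hno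
      push_neg at hno
      exact hv (funext hno)
    obtain ⟨i0, hi0⟩ := hex
    have hi0ne : i0 ≠ 0 := by rintro rfl; exact hi0 h0
    have hmu : mu = (d (i0.val+1) : ℝ) := by
      have := hkey i0 hi0ne
      rw [h0, mul_eq_zero] at this
      rcases this with h | h
      · linarith
      · exact absurd h hi0
    have hunique : ∀ i : Fin (2*n+1), i ≠ 0 → i ≠ i0 → v i = 0 := by
      intro i hi hii0
      by_contra hvi
      have hmu2 : mu = (d (i.val+1) : ℝ) := by
        have := hkey i hi
        rw [h0, mul_eq_zero] at this
        rcases this with h | h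
        · linarith
        · exact absurd h hvi
      have hdd : (d (i.val+1) : ℝ) = (d (i0.val+1) : ℝ) := by rw [← hmu2, hmu]
      have hdd' : d (i.val+1) = d (i0.val+1) := by exact_mod_cast hdd
      have hne : i.val + 1 ≠ i0.val + 1 := fun h => hii0 (Fin.ext (by omega))
      rcases Nat.lt_or_ge (i.val+1) (i0.val+1) with h | h
      · have := d_lt_d hd1 hdk (i.val+1) (i0.val+1) (by omega) h
        omega
      · have := d_lt_d hd1 hdk (i0.val+1) (i.val+1) (by omega) (by omega)
        omega
    have hi0mem : i0 ∈ (Finset.univ : Finset (Fin (2*n+1))).erase 0 :=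
      Finset.mem_erase.mpr ⟨hi0ne, Finset.mem_univ i0⟩
    have hsum : ∑ i ∈ (Finset.univ : Finset (Fin (2*n+1))).erase 0, v i = v i0 :=
      Finset.sum_eq_single_of_mem i0 hi0mem
        (fun i hi hne => hunique i (Finset.mem_erase.mp hi).1 hne)
    rw [h0, hsum, zero_add, mul_zero] at hE0
    exact hi0 hE0
  -- the characteristic polynomial vanishes at mu
  have hprod_i : ∀ i : Fin (2*n+1), i ≠ 0 →
      v 0 * ∏ j ∈ (Finset.Icc 2 (2*n+1)).erase (i.val+1), (mu - (d j:ℝ))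
        = v i * ∏ k ∈ Finset.Icc 2 (2*n+1), (mu - (d k:ℝ)) := by
    intro i hi
    have hmem : i.val + 1 ∈ Finset.Icc 2 (2*n+1) := by
      simp only [Finset.mem_Icc]
      have h1 : i.val ≠ 0 := fun h => hi (Fin.ext h)
      have h2 := i.isLt
      omega
    rw [← Finset.mul_prod_erase _ _ hmem, ← hkey i hi]
    ring
  have hqmu : ((PP d (2*n+1)).map (Int.castRingHom ℝ)).eval mu = 0 := by
    have hE0' : (mu - (d 1 : ℝ)) * v 0
        = ∑ i ∈ (Finset.univ : Finset (Fin (2*n+1))).erase 0, v i := by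
      rw [hd1]
      push_cast
      linear_combination -hE0
    have hveq : v 0 * ((PP d (2*n+1)).map (Int.castRingHom ℝ)).eval mu = 0 := by
      rw [PP_eval_real]
      have hre := reindex_sum (N := 2*n)
        (fun k => v 0 * ∏ j ∈ (Finset.Icc 2 (2*n+1)).erase k, (mu - (d j:ℝ)))
      rw [mul_sub, Finset.mul_sum, ← hre]
      have hsum2 : ∑ i ∈ (Finset.univ : Finset (Fin (2*n+1))).erase 0,
          v 0 * ∏ j ∈ (Finset.Icc 2 (2*n+1)).erase (i.val+1), (mu - (d j:ℝ))
          = (∑ i ∈ (Finset.univ : Finset (Fin (2*n+1))).erase 0, v i)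
            * ∏ k ∈ Finset.Icc 2 (2*n+1), (mu - (d k:ℝ)) := by
        rw [Finset.sum_mul]
        exact Finset.sum_congr rfl (fun i hi => hprod_i i (Finset.mem_erase.mp hi).1)
      rw [hsum2, ← hE0']
      ring
    rcases mul_eq_zero.mp hveq with h | h
    · exact absurd h hv0
    · exact h
  -- minimal polynomial of mu
  have hmonic : (PP d (2*n+1)).Monic := PP_monic (by omega)
  have hirr : Irreducible ((PP d (2*n+1)).map (Int.castRingHom ℚ)) :=
    (Polynomial.IsPrimitive.Int.irreducible_iff_irreducible_map_cast hmonic.isPrimitive).mp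
      (PP_irreducible_int hd1 hdk hm3 hodd)
  have hcomp : (algebraMap ℚ ℝ).comp (Int.castRingHom ℚ) = Int.castRingHom ℝ :=
    Subsingleton.elim _ _
  have haev : Polynomial.aeval mu ((PP d (2*n+1)).map (Int.castRingHom ℚ)) = 0 := by
    rw [Polynomial.aeval_def, Polynomial.eval₂_eq_eval_map, Polynomial.map_map, hcomp]
    exact hqmu
  have hmin : minpoly ℚ mu = (PP d (2*n+1)).map (Int.castRingHom ℚ) :=
    (minpoly.eq_of_irreducible_of_monic hirr haev (hmonic.map _)).symm
  have hminnd : (minpoly ℚ mu).natDegree = 2*n+1 := by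
    rw [hmin, hmonic.natDegree_map, PP_natDegree (by omega)]
  -- linear independence
  rw [Fintype.linearIndependent_iff]
  intro g hg
  have hg' : ∑ i, (g i : ℝ) * v i = 0 := by
    rw [← hg]
    exact Finset.sum_congr rfl (fun i _ => (Rat.smul_def _ _).symm)
  set gq : ℕ → ℚ := fun k => if h : k - 1 < 2*n+1 then g ⟨k-1, h⟩ else 0 with hgqdef
  set G : Polynomial ℚ := C (g 0) * ∏ k ∈ Finset.Icc 2 (2*n+1), (X - C ((d k : ℤ) : ℚ))
    + ∑ k ∈ Finset.Icc 2 (2*n+1), C (gq k)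
        * ∏ j ∈ (Finset.Icc 2 (2*n+1)).erase k, (X - C ((d j : ℤ) : ℚ)) with hGdef
  have hgq_eq : ∀ i : Fin (2*n+1), gq (i.val + 1) = g i := by
    intro i
    have h : i.val + 1 - 1 < 2*n+1 := by have := i.isLt; omega
    rw [hgqdef]
    simp only []
    rw [dif_pos h]
    congr 1
  have hGR : (G.map (algebraMap ℚ ℝ)).eval mu
      = (g 0 : ℝ) * ∏ k ∈ Finset.Icc 2 (2*n+1), (mu - (d k:ℝ))
        + ∑ k ∈ Finset.Icc 2 (2*n+1), (gq k : ℝ)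
            * ∏ j ∈ (Finset.Icc 2 (2*n+1)).erase k, (mu - (d j:ℝ)) := by
    rw [hGdef]
    simp [Polynomial.map_add, Polynomial.map_mul, Polynomial.map_prod, Polynomial.map_sum,
      Polynomial.map_sub, Polynomial.eval_finset_sum, eval_prod, eq_ratCast]
  have hGmu : (G.map (algebraMap ℚ ℝ)).eval mu = 0 := by
    have hveq : v 0 * (G.map (algebraMap ℚ ℝ)).eval mu = 0 := by
      rw [hGR, mul_add, Finset.mul_sum]
      have hcongr : ∀ k ∈ Finset.Icc 2 (2*n+1),
          v 0 * ((gq k : ℝ) * ∏ j ∈ (Finset.Icc 2 (2*n+1)).erase k, (mu - (d j:ℝ)))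
          = (gq k:ℝ) * (v 0 * ∏ j ∈ (Finset.Icc 2 (2*n+1)).erase k, (mu - (d j:ℝ))) :=
        fun k _ => by ring
      have hre := reindex_sum (N := 2*n)
        (fun k => (gq k : ℝ) * (v 0 * ∏ j ∈ (Finset.Icc 2 (2*n+1)).erase k, (mu - (d j:ℝ))))
      rw [Finset.sum_congr rfl hcongr, ← hre]
      have hsum2 : ∑ i ∈ (Finset.univ : Finset (Fin (2*n+1))).erase 0,
          (gq (i.val+1) : ℝ) * (v 0 * ∏ j ∈ (Finset.Icc 2 (2*n+1)).erase (i.val+1), (mu - (d j:ℝ)))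
          = ∑ i ∈ (Finset.univ : Finset (Fin (2*n+1))).erase 0,
              ((g i : ℝ) * v i) * ∏ k ∈ Finset.Icc 2 (2*n+1), (mu - (d k:ℝ)) := by
        apply Finset.sum_congr rfl
        intro i hi
        rw [hgq_eq i, hprod_i i (Finset.mem_erase.mp hi).1]
        ring
      rw [hsum2]
      have hfinal : v 0 * ((g 0 : ℝ) * ∏ k ∈ Finset.Icc 2 (2*n+1), (mu - (d k:ℝ)))
          + ∑ i ∈ (Finset.univ : Finset (Fin (2*n+1))).erase 0,
              ((g i : ℝ) * v i) * ∏ k ∈ Finset.Icc 2 (2*n+1), (mu - (d k:ℝ))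
          = (∑ i, (g i : ℝ) * v i) * ∏ k ∈ Finset.Icc 2 (2*n+1), (mu - (d k:ℝ)) := by
        rw [Finset.sum_mul, ← Finset.add_sum_erase _
          (fun i => ((g i : ℝ) * v i) * ∏ k ∈ Finset.Icc 2 (2*n+1), (mu - (d k:ℝ)))
          (Finset.mem_univ (0 : Fin (2*n+1)))]
        ring
      rw [hfinal, hg', zero_mul]
    rcases mul_eq_zero.mp hveq with h | h
    · exact absurd h hv0
    · exact h
  have haevG : Polynomial.aeval mu G = 0 := by
    rw [Polynomial.aeval_def, Polynomial.eval₂_eq_eval_map]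
    exact hGmu
  have hGzero : G = 0 := by
    by_contra hGne
    have hdvd := minpoly.dvd ℚ mu haevG
    have hle := Polynomial.natDegree_le_of_dvd hdvd hGne
    rw [hminnd] at hle
    have hb1 : (C (g 0) * ∏ k ∈ Finset.Icc 2 (2*n+1), (X - C ((d k : ℤ) : ℚ))).natDegree
        ≤ 2*n := by
      apply le_trans (Polynomial.natDegree_mul_le)
      rw [Polynomial.natDegree_C, natDegree_prod_of_monic _ _ (fun k _ => monic_X_sub_C _)]
      have h1 : ∑ k ∈ Finset.Icc 2 (2*n+1), (X - C ((d k : ℤ) : ℚ)).natDegree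
          = ∑ k ∈ Finset.Icc 2 (2*n+1), 1 :=
        Finset.sum_congr rfl fun j _ => natDegree_X_sub_C _
      rw [h1, Finset.sum_const, smul_eq_mul, mul_one, Nat.card_Icc]
      omega
    have hb2 : (∑ k ∈ Finset.Icc 2 (2*n+1), C (gq k)
        * ∏ j ∈ (Finset.Icc 2 (2*n+1)).erase k, (X - C ((d j : ℤ) : ℚ))).natDegree ≤ 2*n := by
      apply Polynomial.natDegree_sum_le_of_forall_le
      intro k hk
      apply le_trans (Polynomial.natDegree_mul_le)
      rw [Polynomial.natDegree_C, natDegree_prod_of_monic _ _ (fun j _ => monic_X_sub_C _)]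
      have h1 : ∑ j ∈ (Finset.Icc 2 (2*n+1)).erase k, (X - C ((d j : ℤ) : ℚ)).natDegree
          = ∑ j ∈ (Finset.Icc 2 (2*n+1)).erase k, 1 :=
        Finset.sum_congr rfl fun j _ => natDegree_X_sub_C _
      rw [h1, Finset.sum_const, smul_eq_mul, mul_one, Finset.card_erase_of_mem hk, Nat.card_Icc]
      omega
    have hbound : G.natDegree ≤ 2*n := by
      rw [hGdef]
      exact le_trans (Polynomial.natDegree_add_le _ _) (max_le hb1 hb2)
    omega
  have hgq0 : ∀ k ∈ Finset.Icc 2 (2*n+1), gq k = 0 := by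
    intro k hk
    have hev0 : G.eval ((d k : ℤ):ℚ) = 0 := by rw [hGzero]; simp
    have hev2 : G.eval ((d k : ℤ):ℚ)
        = gq k * ∏ j ∈ (Finset.Icc 2 (2*n+1)).erase k, (((d k:ℤ):ℚ) - ((d j:ℤ):ℚ)) := by
      rw [hGdef]
      simp only [Polynomial.eval_add, Polynomial.eval_mul, Polynomial.eval_C, eval_prod,
        Polynomial.eval_finset_sum, Polynomial.eval_sub, Polynomial.eval_X]
      rw [Finset.prod_eq_zero hk (sub_self (((d k : ℤ) : ℚ))), mul_zero, zero_add]
      exact Finset.sum_eq_single_of_mem k hk (fun i hi hne => by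
        rw [Finset.prod_eq_zero (Finset.mem_erase.mpr ⟨Ne.symm hne, hk⟩)
          (sub_self (((d k : ℤ) : ℚ))), mul_zero])
    have hne : ∏ j ∈ (Finset.Icc 2 (2*n+1)).erase k, (((d k:ℤ):ℚ) - ((d j:ℤ):ℚ)) ≠ 0 := by
      rw [Finset.prod_ne_zero_iff]
      intro j hj
      obtain ⟨hjk, hjmem⟩ := Finset.mem_erase.mp hj
      simp only [Finset.mem_Icc] at hjmem
      have hkm : 2 ≤ k ∧ k ≤ 2*n+1 := by simpa [Finset.mem_Icc] using hk
      have hdd : d k ≠ d j := by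
        rcases Nat.lt_or_ge j k with h | h
        · have := d_lt_d hd1 hdk j k (by omega) h
          omega
        · have := d_lt_d hd1 hdk k j (by omega) (by omega)
          omega
      intro hcon
      apply hdd
      have := sub_eq_zero.mp hcon
      exact_mod_cast this
    rw [hev0] at hev2
    exact (mul_eq_zero.mp hev2.symm).resolve_right hne
  have hg0 : g 0 = 0 := by
    have hev0 : G.eval 1 = 0 := by rw [hGzero]; simp
    have hev2 : G.eval 1 = g 0 * ∏ k ∈ Finset.Icc 2 (2*n+1), ((1:ℚ) - ((d k:ℤ):ℚ)) := by
      rw [hGdef]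
      simp only [Polynomial.eval_add, Polynomial.eval_mul, Polynomial.eval_C, eval_prod,
        Polynomial.eval_finset_sum, Polynomial.eval_sub, Polynomial.eval_X, Polynomial.eval_one]
      rw [Finset.sum_eq_zero (fun k hk => by rw [hgq0 k hk]; simp), add_zero]
    have hne : ∏ k ∈ Finset.Icc 2 (2*n+1), ((1:ℚ) - ((d k:ℤ):ℚ)) ≠ 0 := by
      rw [Finset.prod_ne_zero_iff]
      intro k hk
      simp only [Finset.mem_Icc] at hk
      have := d_two_le hd1 hdk k hk.1
      intro hcon
      have h2 : ((d k : ℤ):ℚ) = 1 := by linarith [sub_eq_zero.mp hcon]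
      have h3 : d k = 1 := by exact_mod_cast h2
      omega
    rw [hev0] at hev2
    exact (mul_eq_zero.mp hev2.symm).resolve_right hne
  intro i
  rcases eq_or_ne i 0 with rfl | hi
  · exact hg0
  · rw [← hgq_eq i]
    apply hgq0
    simp only [Finset.mem_Icc]
    have h1 : i.val ≠ 0 := fun h => hi (Fin.ext h)
    have h2 := i.isLt
    omega
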